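/- Let K ⊆ L be an extension of fields, O_K a valuation ring of K, and B a subring of L containing O_K such that the ideal of B generated by the maximal ideal M_K of O_K is proper. Then there exists a valuation ring O_L of L containing B whose maximal ideal M_L satisfies M_L ∩ O_K = M_K; in particular the valuation on K extends to a valuation on L with respect to which every element of B has nonnegative valuation. -/

import Mathlib

/-- Chevalley extension theorem: if `O_K` is a valuation ring of `K ⊆ L` and `B` a
subring of `L` containing (the image of) `O_K` such that the ideal of `B` generated
by the maximal ideal `M_K` is proper, then there is a valuation ring `O_L` of `L`
containing `B` whose maximal ideal `M_L` satisfies `M_L ∩ O_K = M_K`. -/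
theorem exists_valuationSubring_extending
    {K L : Type*} [Field K] [Field L] [Algebra K L]
    (O : ValuationSubring K) (B : Subring L)
    (hOB : ∀ x : K, x ∈ O → algebraMap K L x ∈ B)
    (hproper : Ideal.span {y : B | ∃ m : O, m ∈ IsLocalRing.maximalIdeal O ∧
      (y : L) = algebraMap K L m} ≠ ⊤) :
    ∃ OL : ValuationSubring L, ∃ hsub : (B : Set L) ⊆ (OL : Set L),
      ∀ (x : K) (hx : x ∈ O),
        ((⟨algebraMap K L x, hsub (hOB x hx)⟩ : OL) ∈ IsLocalRing.maximalIdeal OL ↔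
          (⟨x, hx⟩ : O) ∈ IsLocalRing.maximalIdeal O) := by
  obtain ⟨m, hm, hle⟩ := Ideal.exists_le_maximal _ hproper
  haveI : m.IsPrime := hm.isPrime
  obtain ⟨OL, hB⟩ := (LocalSubring.ofPrime B m).exists_le_valuationSubring
  have hsub : (B : Set L) ⊆ (OL : Set L) :=
    fun x hx ↦ hB.1 (LocalSubring.le_ofPrime B m hx)
  refine ⟨OL, hsub, fun x hx ↦ ?_⟩
  constructor
  · -- contrapositive: if x is a unit in O, its image is a unit in OL
    intro hmem
    by_contra hxm
    rw [IsLocalRing.mem_maximalIdeal, mem_nonunits_iff, not_not] at hxm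
    obtain ⟨u, hu⟩ := hxm
    have hy : algebraMap K L ((u⁻¹ : Oˣ) : O) ∈ OL := hsub (hOB _ ((u⁻¹ : Oˣ) : O).2)
    have : IsUnit (⟨algebraMap K L x, hsub (hOB x hx)⟩ : OL) := by
      refine isUnit_iff_exists_inv.mpr ⟨⟨_, hy⟩, ?_⟩
      ext
      have : ((u : O) : K) * (((u⁻¹ : Oˣ) : O) : K) = 1 := by
        rw [← Subring.coe_mul]
        norm_cast
        simp
      rw [hu] at this
      simpa [← map_mul] using congrArg (algebraMap K L) this
    exact (IsLocalRing.mem_maximalIdeal _).mp hmem this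
  · intro hxm
    rw [IsLocalRing.mem_maximalIdeal, mem_nonunits_iff]
    intro hunit
    -- transfer unit-ness down to the localization of B at m
    have ha : algebraMap K L x ∈ (LocalSubring.ofPrime B m).toSubring :=
      LocalSubring.le_ofPrime B m (hOB x hx)
    have h2 : IsUnit (Subring.inclusion hB.1 (⟨algebraMap K L x, ha⟩ :
        (LocalSubring.ofPrime B m).toSubring)) := by
      exact hunit
    have h3 := hB.2.1 _ h2
    have h4 : IsUnit (algebraMap B (LocalSubring.ofPrime B m).toSubring
        ⟨algebraMap K L x, hOB x hx⟩) := h3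
    rw [IsLocalization.AtPrime.isUnit_to_map_iff _ m] at h4
    exact h4 (hle (Ideal.subset_span ⟨⟨x, hx⟩, hxm, rfl⟩))
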